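/- If there exists a sorting network of size k ≥ 1 on n ≥ 2 channels, then there exists a sorting network of size k on n channels whose first comparator is (1,2); equivalently, the singleton set containing the one-comparator network (1,2) is a complete set of filters on n channels. -/

import Mathlib

/-- Applying a single comparator `c = (i, j)`: the minimum of the two values goes to
channel `i` and the maximum to channel `j`. -/
def applyComp {n : ℕ} {α : Type*} [LinearOrder α] (c : Fin n × Fin n) (x : Fin n → α) :
    Fin n → α :=
  fun k => if k = c.1 then min (x c.1) (x c.2)
    else if k = c.2 then max (x c.1) (x c.2)
    else x k

/-- Propagating an input vector through a comparator network (a list of comparators). -/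
def runNet {n : ℕ} {α : Type*} [LinearOrder α] (C : List (Fin n × Fin n)) (x : Fin n → α) :
    Fin n → α :=
  C.foldl (fun v c => applyComp c v) x

/-- A standard comparator network: every comparator `(i, j)` satisfies `i < j`. -/
def Standard {n : ℕ} (C : List (Fin n × Fin n)) : Prop :=
  ∀ c ∈ C, c.1 < c.2

/-- A sorting network: a standard comparator network sorting every Boolean input. -/
def IsSortingNet {n : ℕ} (C : List (Fin n × Fin n)) : Prop :=
  Standard C ∧ ∀ x : Fin n → Bool, Monotone (runNet C x)

/-- The set of outputs of a comparator network on Boolean inputs. -/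
def outputs {n : ℕ} (C : List (Fin n × Fin n)) : Set (Fin n → Bool) :=
  Set.range (runNet C)

/-- The action of a permutation of channels on a set of Boolean vectors. -/
def permSet {n : ℕ} (π : Equiv.Perm (Fin n)) (S : Set (Fin n → Bool)) :
    Set (Fin n → Bool) :=
  (fun x => x ∘ ⇑π.symm) '' S

/-- `Ca` subsumes `Cb`: some permutation maps `outputs Ca` into `outputs Cb`. -/
def Subsumes {n : ℕ} (Ca Cb : List (Fin n × Fin n)) : Prop :=
  ∃ π : Equiv.Perm (Fin n), permSet π (outputs Ca) ⊆ outputs Cb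

/-- `sortSize n` is the least size of a sorting network on `n` channels. -/
noncomputable def sortSize (n : ℕ) : ℕ :=
  sInf {k | ∃ C : List (Fin n × Fin n), IsSortingNet C ∧ C.length = k}

/-- Number of ones in a Boolean vector. -/
def ones {n : ℕ} (x : Fin n → Bool) : ℕ :=
  (Finset.univ.filter fun i => x i = true).card

/-- A (finite) complete set of filters on `n` channels. -/
def CompleteFilters (n : ℕ) (F : Finset (List (Fin n × Fin n))) : Prop :=
  (∃ C : List (Fin n × Fin n), IsSortingNet C ∧ C.length = sortSize n) ↔
    (∃ C ∈ F, ∃ C' : List (Fin n × Fin n),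
      IsSortingNet (C ++ C') ∧ (C ++ C').length = sortSize n)

/-- `wSet C x k` is the set of positions `i` such that some output vector of `C`
with exactly `k` ones has value `x` at position `i`. -/
def wSet {n : ℕ} (C : List (Fin n × Fin n)) (x : Bool) (k : ℕ) : Set (Fin n) :=
  {i | ∃ v ∈ outputs C, ones v = k ∧ v i = x}

section aux

variable {n : ℕ} {α : Type*} [LinearOrder α]

lemma runNet_nil (x : Fin n → α) : runNet [] x = x := rfl

lemma runNet_cons (c : Fin n × Fin n) (L : List (Fin n × Fin n)) (x : Fin n → α) :
    runNet (c :: L) x = runNet L (applyComp c x) := rfl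

lemma applyComp_map (σ : Equiv.Perm (Fin n)) (c : Fin n × Fin n) (x : Fin n → α) :
    applyComp (σ c.1, σ c.2) x = (applyComp c (x ∘ σ)) ∘ ⇑σ.symm := by
  funext k
  simp only [applyComp, Function.comp_apply, Equiv.symm_apply_eq, Equiv.apply_symm_apply]

lemma runNet_map (σ : Equiv.Perm (Fin n)) (L : List (Fin n × Fin n)) (x : Fin n → α) :
    runNet (L.map (fun c => (σ c.1, σ c.2))) x = (runNet L (x ∘ σ)) ∘ ⇑σ.symm := by
  induction L generalizing x with
  | nil =>
    funext k; simp [runNet_nil]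
  | cons c L ih =>
    simp only [List.map_cons, runNet_cons]
    rw [ih]
    have h : applyComp (σ c.1, σ c.2) x ∘ ⇑σ = applyComp c (x ∘ ⇑σ) := by
      rw [applyComp_map σ c x]
      funext k
      simp [Function.comp]
    rw [h]

lemma applyComp_rev (c : Fin n × Fin n) (x : Fin n → α) :
    applyComp (c.2, c.1) x = (applyComp c x) ∘ ⇑(Equiv.swap c.1 c.2) := by
  funext k
  by_cases h1 : k = c.1 <;> by_cases h2 : k = c.2 <;>
    simp [applyComp, h1, h2, Equiv.swap_apply_def, min_comm, max_comm] <;>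
    aesop

/-- Untangling lemma. -/
lemma untangle : ∀ (m : ℕ) (L : List (Fin n × Fin n)), L.length = m →
    (∀ c ∈ L, c.1 ≠ c.2) →
    ∃ (L' : List (Fin n × Fin n)) (ρ : Equiv.Perm (Fin n)),
      Standard L' ∧ L'.length = L.length ∧
      (∀ x : Fin n → Bool, runNet L x = (runNet L' x) ∘ ⇑ρ) ∧
      L'.head? = (L.map (fun c => (min c.1 c.2, max c.1 c.2))).head? := by
  intro m
  induction m with
  | zero =>
    intro L hL _
    rw [List.length_eq_zero_iff] at hL
    subst hL
    exact ⟨[], Equiv.refl _, fun c hc => absurd hc List.not_mem_nil, rfl,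
      fun x => rfl, rfl⟩
  | succ m ih =>
    intro L hL hne
    obtain ⟨c, rest, rfl⟩ : ∃ c rest, L = c :: rest := by
      cases L with
      | nil => simp at hL
      | cons c rest => exact ⟨c, rest, rfl⟩
    have hrestlen : rest.length = m := by simpa using hL
    rcases lt_trichotomy c.1 c.2 with hlt | heq | hgt
    · obtain ⟨L', ρ, hstd, hlen, hrun, hhead⟩ :=
        ih rest hrestlen (fun d hd => hne d (List.mem_cons_of_mem c hd))
      refine ⟨c :: L', ρ, ?_, by simpa using hlen, ?_, ?_⟩
      · intro d hd
        rcases List.mem_cons.1 hd with rfl | hd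
        · exact hlt
        · exact hstd d hd
      · intro x
        rw [runNet_cons, runNet_cons, hrun]
      · simp [min_eq_left hlt.le, max_eq_right hlt.le]
    · exact absurd heq (hne c List.mem_cons_self)
    · set σ := Equiv.swap c.1 c.2 with hσ
      have hσsymm : σ.symm = σ := Equiv.symm_swap _ _
      set restσ := rest.map (fun d => (σ d.1, σ d.2)) with hrestσ
      have hlenσ : restσ.length = m := by rw [hrestσ, List.length_map]; exact hrestlen
      have hneσ : ∀ d ∈ restσ, d.1 ≠ d.2 := by
        intro d hd
        simp only [hrestσ, List.mem_map] at hd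
        obtain ⟨e, he, rfl⟩ := hd
        exact fun h => hne e (List.mem_cons_of_mem c he) (σ.injective h)
      obtain ⟨L', ρ, hstd, hlen, hrun, hhead⟩ := ih restσ hlenσ hneσ
      refine ⟨(c.2, c.1) :: L', σ.trans ρ, ?_, ?_, ?_, ?_⟩
      · intro d hd
        rcases List.mem_cons.1 hd with rfl | hd
        · exact hgt
        · exact hstd d hd
      · simp only [List.length_cons, hlen, hlenσ, hrestlen]
      · intro x
        rw [runNet_cons, runNet_cons]
        have h1 : applyComp c x = applyComp (c.2, c.1) x ∘ ⇑σ := by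
          rw [applyComp_rev c x]
          funext k
          simp [Function.comp, Equiv.swap_apply_self, hσ]
        rw [h1]
        set z := applyComp (c.2, c.1) x with hz
        have h2 : runNet restσ z = (runNet rest (z ∘ σ)) ∘ ⇑σ.symm := runNet_map σ rest z
        have h3 : runNet rest (z ∘ ⇑σ) = (runNet restσ z) ∘ ⇑σ := by
          rw [h2, hσsymm]
          funext k
          simp [Function.comp, Equiv.swap_apply_self, hσ]
        rw [h3, hrun z]
        funext k
        simp [Function.comp]
      · simp [min_eq_right hgt.le, max_eq_left hgt.le]

lemma runNet_fixed_of_monotone (L : List (Fin n × Fin n)) (hL : Standard L)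
    (x : Fin n → α) (hx : Monotone x) : runNet L x = x := by
  induction L generalizing x with
  | nil => rfl
  | cons c L ih =>
    have hc : c.1 < c.2 := hL c List.mem_cons_self
    have hfix : applyComp c x = x := by
      funext k
      simp only [applyComp]
      split_ifs with h1 h2
      · subst h1; exact min_eq_left (hx hc.le)
      · subst h2; exact max_eq_right (hx hc.le)
      · rfl
    rw [runNet_cons, hfix]
    exact ih (fun d hd => hL d (List.mem_cons_of_mem c hd)) x hx

lemma perm_eq_refl_of_monotone (σ : Equiv.Perm (Fin n)) (h : Monotone ⇑σ) :
    ∀ i, σ i = i := by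
  have hsm : StrictMono ⇑σ := h.strictMono_of_injective σ.injective
  have : hsm.orderIsoOfSurjective _ σ.surjective = OrderIso.refl (Fin n) :=
    Subsingleton.elim _ _
  intro i
  have := congrArg (fun e : Fin n ≃o Fin n => e i) this
  simpa using this

/-- Main auxiliary lemma: any sorting network of positive size can be transformed
into one of the same size whose first comparator is `(0,1)`. -/
lemma main_aux {n k : ℕ} (h0 : 0 < n) (h1 : 1 < n) (hk : 1 ≤ k) :
    (∃ C : List (Fin n × Fin n), IsSortingNet C ∧ C.length = k) →
      ∃ C : List (Fin n × Fin n), IsSortingNet C ∧ C.length = k ∧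
        C.head? = some (⟨0, h0⟩, ⟨1, h1⟩) := by
  rintro ⟨C, hC, hlen⟩
  obtain ⟨c, rest, rfl⟩ : ∃ c rest, C = c :: rest := by
    cases C with
    | nil => simp at hlen; omega
    | cons c rest => exact ⟨c, rest, rfl⟩
  have hc12 : c.1 < c.2 := hC.1 c List.mem_cons_self
  set z0 : Fin n := ⟨0, h0⟩ with hz0
  set z1 : Fin n := ⟨1, h1⟩ with hz1
  have hz01 : z0 ≠ z1 := by simp [hz0, hz1, Fin.ext_iff]
  -- build π with π c.1 = z0, π c.2 = z1
  set τ1 := Equiv.swap c.1 z0 with hτ1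
  set τ2 := Equiv.swap (τ1 c.2) z1 with hτ2
  set π := τ1.trans τ2 with hπ
  have hπ1 : π c.1 = z0 := by
    have h1' : τ1 c.1 = z0 := Equiv.swap_apply_left _ _
    have hb : τ1 c.2 ≠ z0 := by
      rw [← h1']
      exact fun h => hc12.ne' (τ1.injective h)
    simp only [hπ, Equiv.trans_apply, h1']
    exact Equiv.swap_apply_of_ne_of_ne (Ne.symm hb) hz01
  have hπ2 : π c.2 = z1 := by
    simp only [hπ, Equiv.trans_apply]
    exact Equiv.swap_apply_left _ _
  -- relabeled network
  set D0 := (c :: rest).map (fun d => (π d.1, π d.2)) with hD0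
  have hD0ne : ∀ d ∈ D0, d.1 ≠ d.2 := by
    intro d hd
    simp only [hD0, List.mem_map] at hd
    obtain ⟨e, he, rfl⟩ := hd
    exact fun h => (hC.1 e he).ne (π.injective h)
  obtain ⟨D, ρ, hDstd, hDlen, hDrun, hDhead⟩ := untangle D0.length D0 rfl hD0ne
  -- runNet D0 x = runNet C (x ∘ π) ∘ π.symm
  have hrel : ∀ x : Fin n → Bool,
      runNet D0 x = (runNet (c :: rest) (x ∘ ⇑π)) ∘ ⇑π.symm :=
    fun x => runNet_map π (c :: rest) x
  -- so runNet D x = runNet C (x ∘ π) ∘ μ with μ = ρ.symm.trans π.symm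
  set μ := ρ.symm.trans π.symm with hμ
  have hcomb : ∀ x : Fin n → Bool,
      runNet D x = (runNet (c :: rest) (x ∘ ⇑π)) ∘ ⇑μ := by
    intro x
    have := hDrun x
    rw [hrel x] at this
    funext i
    have := congrFun this (ρ.symm i)
    simp only [Function.comp_apply, Equiv.apply_symm_apply] at this
    simp [hμ, Function.comp, ← this]
  -- μ.symm is monotone, hence μ = id
  have hmono : ∀ x : Fin n → Bool, Monotone x → Monotone (x ∘ ⇑μ.symm) := by
    intro x hx
    have h1' : runNet D x = x := runNet_fixed_of_monotone D hDstd x hx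
    have h2' := hcomb x
    rw [h1'] at h2'
    have : x ∘ ⇑μ.symm = runNet (c :: rest) (x ∘ ⇑π) := by
      funext i
      have := congrFun h2' (μ.symm i)
      simp only [Function.comp_apply, Equiv.apply_symm_apply] at this
      simpa [Function.comp] using this
    rw [this]
    exact hC.2 _
  have hμmono : Monotone ⇑μ.symm := by
    intro i j hij
    by_contra hcon
    push_neg at hcon
    set x : Fin n → Bool := fun t => decide (μ.symm i ≤ t) with hx
    have hxmono : Monotone x := by
      intro a b hab
      simp only [hx]
      by_cases h : μ.symm i ≤ a
      · simp [h, h.trans hab]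
      · simp [h]
    have := hmono x hxmono hij
    simp only [Function.comp_apply, hx] at this
    rw [decide_eq_true (le_refl (μ.symm i))] at this
    have hxj : decide (μ.symm i ≤ μ.symm j) = false := by
      simp [not_le.mpr hcon]
    rw [hxj] at this
    exact absurd this (by simp)
  have hμid : ∀ i, μ.symm i = i := perm_eq_refl_of_monotone μ.symm hμmono
  -- D is a sorting network
  have hDsort : IsSortingNet D := by
    refine ⟨hDstd, fun x => ?_⟩
    have := hcomb x
    have hid : runNet D x = runNet (c :: rest) (x ∘ ⇑π) := by
      rw [this]
      funext i
      have : μ i = i := by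
        have := hμid (μ i); simpa using this.symm ▸ (Equiv.symm_apply_apply μ i)
      simp [Function.comp, this]
    rw [hid]
    exact hC.2 _
  refine ⟨D, hDsort, ?_, ?_⟩
  · rw [hDlen]; simpa [hD0] using hlen
  · rw [hDhead]
    simp only [hD0, List.map_cons, List.map_map, List.head?_cons, Function.comp]
    have hle : z0 ≤ z1 := Fin.mk_le_mk.mpr (by omega)
    simp [hπ1, hπ2, min_eq_left hle, max_eq_right hle]

end aux

/-- If a sorting network of size `k ≥ 1` on `n ≥ 2` channels exists, then one exists whose
first comparator is `(1,2)` (channels `0` and `1` in 0-based indexing); equivalently, the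
singleton set containing the one-comparator network `(1,2)` is a complete set of filters. -/
theorem first_comparator_one_two (n k : ℕ) (hn : 2 ≤ n) (hk : 1 ≤ k) :
    ((∃ C : List (Fin n × Fin n), IsSortingNet C ∧ C.length = k) →
      ∃ C : List (Fin n × Fin n), IsSortingNet C ∧ C.length = k ∧
        C.head? = some (⟨0, by omega⟩, ⟨1, by omega⟩)) ∧
      CompleteFilters n {[((⟨0, by omega⟩ : Fin n), (⟨1, by omega⟩ : Fin n))]} := by
  have h0 : 0 < n := by omega
  have h1 : 1 < n := by omega
  constructor
  · exact main_aux h0 h1 hk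
  · unfold CompleteFilters
    constructor
    · rintro ⟨C, hC, hlen⟩
      -- sortSize n ≥ 1
      have hpos : 1 ≤ sortSize n := by
        rcases Nat.eq_zero_or_pos (sortSize n) with h | h
        · exfalso
          rw [h, List.length_eq_zero_iff] at hlen
          subst hlen
          have := hC.2 (fun i => decide (i.val = 0))
            (show (⟨0, h0⟩ : Fin n) ≤ ⟨1, h1⟩ from Fin.mk_le_mk.mpr (by omega))
          simp [runNet_nil] at this
          exact absurd this (by decide)
        · exact h
      obtain ⟨D, hD, hDlen, hDhead⟩ := main_aux h0 h1 hpos ⟨C, hC, hlen⟩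
      obtain ⟨d, D', rfl⟩ : ∃ d D', D = d :: D' := by
        cases D with
        | nil => simp at hDhead
        | cons d D' => exact ⟨d, D', rfl⟩
      have hd : d = (⟨0, h0⟩, ⟨1, h1⟩) := by simpa using hDhead
      subst hd
      refine ⟨[(⟨0, h0⟩, ⟨1, h1⟩)], Finset.mem_singleton_self _, D', ?_, ?_⟩
      · simpa using hD
      · simpa using hDlen
    · rintro ⟨C, _, C', hsort, hlen⟩
      exact ⟨C ++ C', hsort, hlen⟩
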